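/- For every q ∈ ℂ and all natural numbers m, j: ∑_{i=0}^{m} C(m,i)_q · (-1)^{i+j} · q^{(i-j)(i-j-1)/2} · C(i,j)_q = δ_{mj} (Kronecker delta). Here (i-j)(i-j-1)/2 is a nonnegative integer for every integer i-j, and all terms with i < j vanish since C(i,j)_q = 0 for j > i. -/

import Mathlib

/-- The Gaussian ($q$-)binomial coefficient `C(n,k)_q`, defined by the recursion
`C(n+1,k)_q = C(n,k-1)_q + q^k * C(n,k)_q`, with `C(n,0)_q = C(n,n)_q = 1` and
`C(n,k)_q = 0` for `k > n`. -/
noncomputable def qBinom (q : ℂ) : ℕ → ℕ → ℂ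
  | 0, 0 => 1
  | 0, _ + 1 => 0
  | _ + 1, 0 => 1
  | n + 1, k + 1 => qBinom q n k + q ^ (k + 1) * qBinom q n (k + 1)

/-- The matrix `σ₁(q,n)` with entries `σ₁(q,n)_{km} = C(n-k, n-m)_q`. -/
noncomputable def sigma1 (q : ℂ) (n : ℕ) : Matrix (Fin (n + 1)) (Fin (n + 1)) ℂ :=
  fun k m => qBinom q (n - k.val) (n - m.val)

/-- The matrix `σ₂(q,n)` with entries
`σ₂(q,n)_{km} = (-1)^{k+m} q^{-(k-m)(k-m-1)/2} C(k,m)_{q⁻¹}` for `m ≤ k`, and `0` otherwise. -/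
noncomputable def sigma2 (q : ℂ) (n : ℕ) : Matrix (Fin (n + 1)) (Fin (n + 1)) ℂ :=
  fun k m =>
    if m.val ≤ k.val then
      (-1 : ℂ) ^ (k.val + m.val) *
        q ^ (-(((k.val - m.val) * (k.val - m.val - 1) / 2 : ℕ) : ℤ)) *
        qBinom q⁻¹ k.val m.val
    else 0

/-- The matrix `S(q)` with entries `S(q)_{km} = (-1)^k q^{-k(k-1)/2}` when `k+m = n`,
and `0` otherwise. -/
noncomputable def Smat (q : ℂ) (n : ℕ) : Matrix (Fin (n + 1)) (Fin (n + 1)) ℂ :=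
  fun k m =>
    if k.val + m.val = n then (-1 : ℂ) ^ k.val * q ^ (-((k.val * (k.val - 1) / 2 : ℕ) : ℤ))
    else 0

/-- `A^♯`, the matrix with entries `(A^♯)_{ij} = A_{n-i, n-j}`. -/
noncomputable def msharp {n : ℕ} (A : Matrix (Fin (n + 1)) (Fin (n + 1)) ℂ) :
    Matrix (Fin (n + 1)) (Fin (n + 1)) ℂ :=
  fun i j => A i.rev j.rev

lemma qBinom_zero_right (q : ℂ) : ∀ n, qBinom q n 0 = 1
  | 0 => rfl
  | _ + 1 => rfl

lemma qBinom_succ_succ (q : ℂ) (n k : ℕ) :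
    qBinom q (n + 1) (k + 1) = qBinom q n k + q ^ (k + 1) * qBinom q n (k + 1) := rfl

lemma qBinom_eq_zero (q : ℂ) : ∀ n k, n < k → qBinom q n k = 0
  | 0, _ + 1, _ => rfl
  | n + 1, k + 1, h => by
    rw [qBinom_succ_succ, qBinom_eq_zero q n k (by omega),
      qBinom_eq_zero q n (k + 1) (by omega)]
    ring

lemma tri (n : ℕ) : (n + 1) * n / 2 = n * (n - 1) / 2 + n := Nat.triangle_succ n

lemma qBinom_aux (q : ℂ) : ∀ m j : ℕ,
    ∑ i ∈ Finset.range (m + 1),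
      qBinom q m i * (-1 : ℂ) ^ (i + j) * q ^ ((i - j) * (i - j - 1) / 2) * qBinom q i j
      = if m = j then 1 else 0
  | 0, 0 => by simp [qBinom]
  | 0, j + 1 => by
    simp [Finset.sum_range_one, qBinom, (by omega : ¬ (0 = j + 1))]
  | m + 1, j => by
    have hsplit :
        ∑ i ∈ Finset.range (m + 1 + 1),
            qBinom q (m + 1) i * (-1 : ℂ) ^ (i + j) *
              q ^ ((i - j) * (i - j - 1) / 2) * qBinom q i j
          = (∑ i ∈ Finset.range (m + 1),
              qBinom q m i * ((-1 : ℂ) ^ (i + 1 + j) *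
                q ^ ((i + 1 - j) * (i + 1 - j - 1) / 2) * qBinom q (i + 1) j))
            + ∑ i ∈ Finset.range (m + 1 + 1),
              q ^ i * qBinom q m i * (-1 : ℂ) ^ (i + j) *
                q ^ ((i - j) * (i - j - 1) / 2) * qBinom q i j := by
      rw [Finset.sum_range_succ' (fun i => qBinom q (m + 1) i * (-1 : ℂ) ^ (i + j) *
            q ^ ((i - j) * (i - j - 1) / 2) * qBinom q i j) (m + 1),
          Finset.sum_range_succ' (fun i => q ^ i * qBinom q m i * (-1 : ℂ) ^ (i + j) *
            q ^ ((i - j) * (i - j - 1) / 2) * qBinom q i j) (m + 1)]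
      have hterm : ∀ i ∈ Finset.range (m + 1),
          qBinom q (m + 1) (i + 1) * (-1 : ℂ) ^ (i + 1 + j) *
              q ^ ((i + 1 - j) * (i + 1 - j - 1) / 2) * qBinom q (i + 1) j
            = qBinom q m i * ((-1 : ℂ) ^ (i + 1 + j) *
                q ^ ((i + 1 - j) * (i + 1 - j - 1) / 2) * qBinom q (i + 1) j)
              + q ^ (i + 1) * qBinom q m (i + 1) * (-1 : ℂ) ^ (i + 1 + j) *
                q ^ ((i + 1 - j) * (i + 1 - j - 1) / 2) * qBinom q (i + 1) j := by
        intro i _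
        rw [qBinom_succ_succ]
        ring
      rw [Finset.sum_congr rfl hterm, Finset.sum_add_distrib]
      simp [qBinom_zero_right]
      ring
    rw [hsplit, Finset.sum_range_succ
      (fun i => q ^ i * qBinom q m i * (-1 : ℂ) ^ (i + j) *
        q ^ ((i - j) * (i - j - 1) / 2) * qBinom q i j) (m + 1)]
    rw [qBinom_eq_zero q m (m + 1) (by omega)]
    simp only [mul_zero, zero_mul, add_zero]
    rw [← Finset.sum_add_distrib]
    rcases j with _ | j'
    · -- j = 0 : every term vanishes
      have hz : ∀ i ∈ Finset.range (m + 1),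
          qBinom q m i * ((-1 : ℂ) ^ (i + 1 + 0) *
              q ^ ((i + 1 - 0) * (i + 1 - 0 - 1) / 2) * qBinom q (i + 1) 0)
            + q ^ i * qBinom q m i * (-1 : ℂ) ^ (i + 0) *
              q ^ ((i - 0) * (i - 0 - 1) / 2) * qBinom q i 0 = 0 := by
        intro i _
        simp only [Nat.add_zero, Nat.sub_zero, Nat.add_sub_cancel,
          qBinom_zero_right]
        rw [tri, pow_add, pow_succ]
        ring
      rw [Finset.sum_congr rfl hz]
      simp
    · -- j = j' + 1
      have hz : ∀ i ∈ Finset.range (m + 1),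
          qBinom q m i * ((-1 : ℂ) ^ (i + 1 + (j' + 1)) *
              q ^ ((i + 1 - (j' + 1)) * (i + 1 - (j' + 1) - 1) / 2) * qBinom q (i + 1) (j' + 1))
            + q ^ i * qBinom q m i * (-1 : ℂ) ^ (i + (j' + 1)) *
              q ^ ((i - (j' + 1)) * (i - (j' + 1) - 1) / 2) * qBinom q i (j' + 1)
          = qBinom q m i * (-1 : ℂ) ^ (i + j') *
              q ^ ((i - j') * (i - j' - 1) / 2) * qBinom q i j' := by
        intro i _
        rw [qBinom_succ_succ]
        have hsign : ((-1 : ℂ)) ^ (i + 1 + (j' + 1)) = (-1 : ℂ) ^ (i + j') := by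
          rw [show i + 1 + (j' + 1) = (i + j') + 2 by omega, pow_add]
          norm_num
        have hsub : i + 1 - (j' + 1) = i - j' := by omega
        rw [hsign, hsub]
        rcases Nat.lt_or_ge i (j' + 1) with hij | hij
        · rw [qBinom_eq_zero q i (j' + 1) hij]
          ring
        · -- i ≥ j' + 1 : exponent identity
          set d := i - j' - 1 with hd
          have h1 : i - j' = d + 1 := by omega
          have h2 : i - (j' + 1) = d := by omega
          have h3 : i - (j' + 1) - 1 = d - 1 := by omega
          rw [h1, h2, tri, pow_add]
          have h4 : q ^ d * q ^ (j' + 1) = q ^ i := by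
            rw [← pow_add]
            congr 1
            omega
          have hsign2 : ((-1 : ℂ)) ^ (i + (j' + 1)) = -(-1 : ℂ) ^ (i + j') := by
            rw [show i + (j' + 1) = (i + j') + 1 by omega, pow_succ]
            ring
          rw [hsign2]
          rw [← h4]; ring
      rw [Finset.sum_congr rfl hz, qBinom_aux q m j']
      by_cases h : m = j' <;> simp [h, Nat.succ_inj, fun hne : ¬ m = j' => (by omega : ¬ (m + 1 = j' + 1))]

lemma castTri (d : ℕ) : ((d : ℤ)) * ((d : ℤ) - 1) / 2 = ((d * (d - 1) / 2 : ℕ) : ℤ) := by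
  rcases d with _ | e
  · norm_num
  · rw [Int.natCast_ediv]
    push_cast [Nat.add_sub_cancel]
    ring_nf

/-- The orthogonality identity
`∑_{i=0}^{m} C(m,i)_q (-1)^{i+j} q^{(i-j)(i-j-1)/2} C(i,j)_q = δ_{mj}`. -/
theorem qBinom_alternating_orthogonality (q : ℂ) (m j : ℕ) :
    ∑ i ∈ Finset.range (m + 1),
        qBinom q m i * (-1 : ℂ) ^ (i + j) *
          q ^ ((((i : ℤ) - (j : ℤ)) * ((i : ℤ) - (j : ℤ) - 1)) / 2) * qBinom q i j
      = if m = j then 1 else 0 := by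
  rw [← qBinom_aux q m j]
  refine Finset.sum_congr rfl fun i _ => ?_
  rcases Nat.lt_or_ge i j with hij | hij
  · rw [qBinom_eq_zero q i j hij, mul_zero, mul_zero]
  · have hd : (i : ℤ) - (j : ℤ) = ((i - j : ℕ) : ℤ) := by omega
    rw [hd, castTri, zpow_natCast]
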